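/- Let J : ℝ → ℝ be a positive C² function and U a symmetric-matrix-valued C¹ function with (d/dt) log J(t) = tr U(t) and (d/dt) tr U(t) + tr(U(t)²) + R(t) = 0 for a continuous function R. Then (d²/dt²) log J(t) + (1/n) ((d/dt) log J(t))² + R(t) ≤ 0 for all t. -/
import Mathlib


/-- Cauchy–Schwarz for symmetric matrices: `(tr U)² ≤ n · tr(U²)`. -/
lemma trace_sq_le (n : ℕ) (U : Matrix (Fin n) (Fin n) ℝ) (hU : U.IsSymm) :
    (Matrix.trace U) ^ 2 ≤ (n : ℝ) * Matrix.trace (U * U) := by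
  have htr : Matrix.trace (U * U) = ∑ i, ∑ j, (U i j) ^ 2 := by
    simp only [Matrix.trace, Matrix.diag, Matrix.mul_apply]
    refine Finset.sum_congr rfl fun i _ => Finset.sum_congr rfl fun j _ => ?_
    have : U j i = U i j := by
      conv_lhs => rw [← hU]
      rfl
    rw [this]; ring
  rw [htr]
  have h1 : (∑ i, U i i) ^ 2 ≤ (n : ℝ) * ∑ i, (U i i) ^ 2 := by
    have := sq_sum_le_card_mul_sum_sq (s := (Finset.univ : Finset (Fin n)))
      (f := fun i => U i i)
    simpa using this
  have h2 : ∑ i, (U i i) ^ 2 ≤ ∑ i, ∑ j, (U i j) ^ 2 := by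
    refine Finset.sum_le_sum fun i _ => ?_
    have : (U i i) ^ 2 ≤ ∑ j, (U i j) ^ 2 :=
      Finset.single_le_sum (f := fun j => (U i j) ^ 2)
        (fun j _ => sq_nonneg _) (Finset.mem_univ i)
    exact this
  calc (Matrix.trace U) ^ 2 = (∑ i, U i i) ^ 2 := rfl
    _ ≤ (n : ℝ) * ∑ i, (U i i) ^ 2 := h1
    _ ≤ (n : ℝ) * ∑ i, ∑ j, (U i j) ^ 2 := by
        exact mul_le_mul_of_nonneg_left h2 (Nat.cast_nonneg n)

/-- If `(log J)' = tr U`, and `(tr U)' + tr(U²) + R = 0` with `U` symmetric,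
then `(log J)'' + (1/n)((log J)')² + R ≤ 0`. -/
theorem stmt_1 (n : ℕ) (hn : 1 ≤ n) (J : ℝ → ℝ) (hJpos : ∀ t, 0 < J t)
    (hJ : ContDiff ℝ 2 J)
    (U : ℝ → Matrix (Fin n) (Fin n) ℝ) (hUsymm : ∀ t, (U t).IsSymm)
    (R : ℝ → ℝ) (hR : Continuous R)
    (hlog : ∀ t, deriv (fun s => Real.log (J s)) t = Matrix.trace (U t))
    (hric : ∀ t, deriv (fun s => Matrix.trace (U s)) t
        + Matrix.trace (U t * U t) + R t = 0) :
    ∀ t, deriv (deriv (fun s => Real.log (J s))) t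
        + (1 / (n : ℝ)) * (deriv (fun s => Real.log (J s)) t) ^ 2 + R t ≤ 0 := by
  intro t
  have hfun : deriv (fun s => Real.log (J s)) = fun s => Matrix.trace (U s) :=
    funext hlog
  rw [hfun]
  have h2 : deriv (fun s => Matrix.trace (U s)) t
      = -(Matrix.trace (U t * U t) + R t) := by linarith [hric t]
  rw [h2]
  have hcs : (Matrix.trace (U t)) ^ 2 ≤ (n : ℝ) * Matrix.trace (U t * U t) :=
    trace_sq_le n (U t) (hUsymm t)
  have hnpos : (0 : ℝ) < n := by exact_mod_cast hn
  have : (1 / (n : ℝ)) * (Matrix.trace (U t)) ^ 2 ≤ Matrix.trace (U t * U t) := by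
    rw [div_mul_eq_mul_div, one_mul, div_le_iff₀ hnpos]
    linarith [hcs]
  linarith
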